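/- Let τ₁ denote the Schreier covering number and let m ∈ ℕ. Then for a finite set A of positive integers, τ₁(A) = m if and only if there exists a Schreier chain {F₁ < ⋯ < F_m} with A = F₁ ∪ ⋯ ∪ F_m such that F₁, …, F_{m−1} are maximal Schreier sets (F_m need not be maximal). -/

import Mathlib

open Finset Filter

/-- A Schreier set: a finite set of naturals whose cardinality is at most its minimum
(elements are automatically positive when nonempty). -/
def IsSchreier (F : Finset ℕ) : Prop := ∀ h : F.Nonempty, F.card ≤ F.min' h

/-- A maximal Schreier set: nonempty with cardinality equal to its minimum. -/
def IsMaxSchreier (F : Finset ℕ) : Prop := ∃ h : F.Nonempty, F.card = F.min' h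

/-- A (possibly empty) list of nonempty successive Schreier sets. -/
def SchreierChainList (C : List (Finset ℕ)) : Prop :=
  (∀ F ∈ C, IsSchreier F ∧ F.Nonempty) ∧
  C.Chain' (fun F G => ∀ a ∈ F, ∀ b ∈ G, a < b)

/-- A Schreier chain: a nonempty finite list of nonempty successive Schreier sets. -/
def IsSchreierChain (C : List (Finset ℕ)) : Prop := C ≠ [] ∧ SchreierChainList C

def chainUnion (C : List (Finset ℕ)) : Finset ℕ := C.foldr (· ∪ ·) ∅

noncomputable def mu (p : ℝ) (x : ℕ → ℝ) (F : Finset ℕ) : ℝ :=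
  (∑ n ∈ F, |x n| ^ p) ^ (1 / p)

/-- The p-th Schreier norm of a (finitely supported) sequence. -/
noncomputable def schreierNorm (p : ℝ) (x : ℕ → ℝ) : ℝ :=
  sSup {r | ∃ F : Finset ℕ, IsSchreier F ∧ F.Nonempty ∧ r = mu p x F}

noncomputable def betaNorm (p : ℝ) (x : ℕ → ℝ) (C : List (Finset ℕ)) : ℝ :=
  ((C.map fun F => (∑ n ∈ F, |x n|) ^ p).sum) ^ (1 / p)

/-- The p-th Baernstein norm of a (finitely supported) sequence. -/
noncomputable def baernsteinNorm (p : ℝ) (x : ℕ → ℝ) : ℝ :=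
  sSup {r | ∃ C : List (Finset ℕ), IsSchreierChain C ∧ r = betaNorm p x C}

/-- The Schreier covering number of a finite set. -/
noncomputable def tau1 (A : Finset ℕ) : ℕ :=
  sInf {m | ∃ C : List (Finset ℕ), SchreierChainList C ∧ C.length = m ∧ A ⊆ chainUnion C}

/-- Increasing enumeration of a set of naturals (0-indexed). -/
noncomputable def enumSet (M : Set ℕ) : ℕ → ℕ := Nat.nth (· ∈ M)

/-- `M(J)`: the image of an index set `J` under the increasing enumeration of `M`. -/
noncomputable def subImage (M : Set ℕ) (J : Finset ℕ) : Finset ℕ := J.image (enumSet M)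

/-- The Gasparis–Leung index `ΓL₁(M, N) ∈ ℕ ∪ {∞}`. -/
noncomputable def GLindex (M N : Set ℕ) : ℕ∞ :=
  ⨆ J ∈ {J : Finset ℕ | IsSchreier (subImage N J)}, (tau1 (subImage M J) : ℕ∞)


section Tau1Char

lemma chainUnion_cons (F : Finset ℕ) (C : List (Finset ℕ)) :
    chainUnion (F :: C) = F ∪ chainUnion C := rfl

lemma chainUnion_nil : chainUnion ([] : List (Finset ℕ)) = ∅ := rfl

lemma SchreierChainList.tail' {F : Finset ℕ} {C : List (Finset ℕ)}
    (h : SchreierChainList (F :: C)) : SchreierChainList C :=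
  ⟨fun G hG => h.1 G (List.mem_cons_of_mem _ hG), h.2.tail⟩

lemma mem_chainUnion {C : List (Finset ℕ)} {x : ℕ} :
    x ∈ chainUnion C ↔ ∃ F ∈ C, x ∈ F := by
  induction C with
  | nil => simp [chainUnion]
  | cons F C ih => simp [chainUnion_cons, ih]

lemma lt_of_mem_chainUnion : ∀ {C : List (Finset ℕ)} {F : Finset ℕ},
    SchreierChainList (F :: C) → ∀ {x}, x ∈ F → ∀ {y}, y ∈ chainUnion C → x < y := by
  intro C
  induction C with
  | nil => intro F h x hx y hy; simp [chainUnion] at hy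
  | cons G C' ih =>
    intro F h x hx y hy
    rw [chainUnion_cons, Finset.mem_union] at hy
    have hrel : ∀ a ∈ F, ∀ b ∈ G, a < b := (List.isChain_cons_cons.mp h.2).1
    rcases hy with hy | hy
    · exact hrel x hx y hy
    · obtain ⟨g, hg⟩ := (h.1 G (by simp)).2
      exact (hrel x hx g hg).trans (ih h.tail' hg hy)

/-- The right-hand-side predicate: a chain with union `A` and all-but-last sets maximal. -/
def GoodChain (A : Finset ℕ) (C : List (Finset ℕ)) : Prop :=
  SchreierChainList C ∧ chainUnion C = A ∧
    ∀ (i : ℕ) (hi : i + 1 < C.length), IsMaxSchreier (C.get ⟨i, Nat.lt_of_succ_lt hi⟩)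

lemma exists_goodChain : ∀ (A : Finset ℕ), (∀ a ∈ A, 0 < a) → A.Nonempty →
    ∃ C, GoodChain A C := by
  intro A
  induction A using Finset.strongInduction with
  | _ A IH =>
  intro hpos hne
  set a := A.min' hne with ha
  by_cases hc : A.card ≤ a
  · refine ⟨[A], ⟨?_, ?_⟩, ?_, ?_⟩
    · intro F hF
      simp only [List.mem_singleton] at hF
      subst hF
      exact ⟨fun _ => hc, hne⟩
    · exact List.isChain_singleton _
    · simp [chainUnion]
    · intro i hi; simp at hi
  · push_neg at hc
    set l := A.sort (· ≤ ·) with hl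
    set F : Finset ℕ := (l.take a).toFinset with hF
    have hnodup : l.Nodup := A.sort_nodup _
    have hsorted : l.Pairwise (· < ·) := A.sortedLT_sort.pairwise
    have hlen : l.length = A.card := Finset.length_sort _
    have htake_nodup : (l.take a).Nodup := hnodup.sublist (List.take_sublist _ _)
    have hFcard : F.card = a := by
      rw [hF, List.card_toFinset, htake_nodup.dedup, List.length_take]
      rw [hlen]
      omega
    have hFsub : F ⊆ A := by
      intro x hx
      rw [hF, List.mem_toFinset] at hx
      have : x ∈ l := List.mem_of_mem_take hx
      rwa [hl, Finset.mem_sort] at this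
    have hsep : ∀ x ∈ F, ∀ y ∈ A \ F, x < y := by
      intro x hx y hy
      rw [hF, List.mem_toFinset] at hx
      have hyA : y ∈ l := by
        rw [hl, Finset.mem_sort]; exact (Finset.mem_sdiff.mp hy).1
      have hyn : y ∉ l.take a := fun h =>
        (Finset.mem_sdiff.mp hy).2 (by rw [hF, List.mem_toFinset]; exact h)
      have hyd : y ∈ l.drop a := by
        have : y ∈ l.take a ++ l.drop a := by rw [List.take_append_drop]; exact hyA
        rcases List.mem_append.mp this with h | h
        · exact absurd h hyn
        · exact h
      have hpair : (l.take a ++ l.drop a).Pairwise (· < ·) := by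
        rw [List.take_append_drop]; exact hsorted
      exact (List.pairwise_append.mp hpair).2.2 x hx y hyd
    have haA : a ∈ A := A.min'_mem hne
    have hFne : F.Nonempty := by
      rw [← Finset.card_pos, hFcard]; exact hpos a haA
    have haF : a ∈ F := by
      by_contra h
      obtain ⟨f, hf⟩ := hFne
      have h1 : f < a := hsep f hf a (Finset.mem_sdiff.mpr ⟨haA, h⟩)
      exact absurd (A.min'_le f (hFsub hf)) (not_le.mpr h1)
    have hFmin : F.min' hFne = a :=
      le_antisymm (Finset.min'_le F a haF) (A.min'_le _ (hFsub (F.min'_mem hFne)))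
    set A' := A \ F with hA'
    have hA'card : A'.card = A.card - a := by
      rw [hA', Finset.card_sdiff_of_subset hFsub, hFcard]
    have hA'ne : A'.Nonempty := by
      rw [← Finset.card_pos, hA'card]; omega
    have hss : A' ⊂ A := Finset.sdiff_ssubset hFsub hFne
    obtain ⟨C', hC'⟩ := IH A' hss
      (fun x hx => hpos x (Finset.mem_sdiff.mp hx).1) hA'ne
    obtain ⟨hC'chain, hC'union, hC'max⟩ := hC'
    have hFmaxS : IsMaxSchreier F := ⟨hFne, hFcard.trans hFmin.symm⟩
    refine ⟨F :: C', ⟨?_, ?_⟩, ?_, ?_⟩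
    · intro G hG
      rcases List.mem_cons.mp hG with h | h
      · subst h
        exact ⟨fun h' => le_of_eq (hFcard.trans hFmin.symm), hFne⟩
      · exact hC'chain.1 G h
    · refine List.isChain_cons.mpr ?_
      refine ⟨?_, hC'chain.2⟩
      intro G hG x hx y hy
      have hGC' : G ∈ C' := List.mem_of_mem_head? hG
      have : y ∈ chainUnion C' := mem_chainUnion.mpr ⟨G, hGC', hy⟩
      rw [hC'union] at this
      exact hsep x hx y this
    · rw [chainUnion_cons, hC'union, hA']
      exact Finset.union_sdiff_of_subset hFsub
    · intro i hi
      cases i with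
      | zero => exact hFmaxS
      | succ j =>
        have hj : j + 1 < C'.length := by
          simp only [List.length_cons] at hi; omega
        exact hC'max j hj

lemma goodChain_length_le : ∀ (n : ℕ) (A : Finset ℕ), A.card = n → A.Nonempty →
    ∀ C, GoodChain A C → ∀ D, SchreierChainList D → A ⊆ chainUnion D →
      C.length ≤ D.length := by
  intro n
  induction n using Nat.strong_induction_on with
  | _ n IH =>
  intro A hcard hne C hC
  obtain ⟨hCchain, hCunion, hCmax⟩ := hC
  rcases C with _ | ⟨F, C'⟩
  · exact fun D _ _ => by simp
  rcases eq_or_ne C' [] with rfl | hC'ne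
  · intro D hD hcover
    cases D with
    | nil =>
      exfalso
      obtain ⟨x, hx⟩ := hne
      simpa [chainUnion] using hcover hx
    | cons G D' => simp
  · have hFne : F.Nonempty := (hCchain.1 F (by simp)).2
    have hsep : ∀ x ∈ F, ∀ y ∈ chainUnion C', x < y :=
      fun x hx y hy => lt_of_mem_chainUnion hCchain hx hy
    have hFA : F ⊆ A := by
      rw [← hCunion, chainUnion_cons]; exact Finset.subset_union_left
    have hAeq : F ∪ chainUnion C' = A := hCunion
    have hUC' : chainUnion C' = A \ F := by
      apply Finset.ext; intro y
      constructor
      · intro hy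
        refine Finset.mem_sdiff.mpr ⟨?_, ?_⟩
        · rw [← hAeq]; exact Finset.mem_union_right _ hy
        · intro hyF; exact lt_irrefl y (hsep y hyF y hy)
      · intro hy
        rcases Finset.mem_sdiff.mp hy with ⟨hyA, hyF⟩
        rcases Finset.mem_union.mp (hAeq ▸ hyA : y ∈ F ∪ chainUnion C') with h | h
        · exact absurd h hyF
        · exact h
    set a := A.min' hne with ha
    have haA : a ∈ A := A.min'_mem hne
    have haF : a ∈ F := by
      rcases Finset.mem_union.mp (hAeq ▸ haA : a ∈ F ∪ chainUnion C') with h | h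
      · exact h
      · exfalso
        obtain ⟨f, hf⟩ := hFne
        exact absurd (A.min'_le f (hFA hf)) (not_le.mpr (hsep f hf a h))
    have hFcard : F.card = a := by
      obtain ⟨h1, h2⟩ := hCmax 0 (by
        simp only [List.length_cons]
        have := List.length_pos_iff.mpr hC'ne
        omega)
      have hmin : F.min' h1 = a :=
        le_antisymm (Finset.min'_le F a haF) (A.min'_le _ (hFA (F.min'_mem h1)))
      exact h2.trans hmin
    obtain ⟨F₂, C''⟩ := List.exists_cons_of_ne_nil hC'ne
    obtain ⟨C'', rfl⟩ := C''
    have hF₂ne : (F₂ : Finset ℕ).Nonempty := (hCchain.tail'.1 F₂ (by simp)).2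
    have hA'ne : (A \ F).Nonempty := by
      obtain ⟨x, hx⟩ := hF₂ne
      exact ⟨x, hUC' ▸ mem_chainUnion.mpr ⟨F₂, by simp, hx⟩⟩
    have hGood' : GoodChain (A \ F) (F₂ :: C'') := by
      refine ⟨hCchain.tail', hUC', ?_⟩
      intro i hi
      exact hCmax (i + 1) (by simp only [List.length_cons] at hi ⊢; omega)
    have hA'card : (A \ F).card < n := by
      rw [← hcard]
      exact Finset.card_lt_card (Finset.sdiff_ssubset hFA hFne)
    intro D
    induction D with
    | nil =>
      intro hD hcover
      exfalso
      obtain ⟨x, hx⟩ := hne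
      simpa [chainUnion] using hcover hx
    | cons G D' ihD =>
      intro hD hcover
      by_cases haG : a ∈ G
      · have hGA' : ∀ x ∈ A \ F, x ∉ G := by
          intro x hxA' hxG
          have hFG : F ⊆ G := by
            intro f hf
            have hfm : f ∈ G ∪ chainUnion D' := hcover (hFA hf)
            rcases Finset.mem_union.mp hfm with h | h
            · exact h
            · exfalso
              have h1 : x < f := lt_of_mem_chainUnion hD hxG h
              have h2 : f < x := hsep f hf x (hUC' ▸ hxA')
              omega
          have hxF : x ∉ F := (Finset.mem_sdiff.mp hxA').2
          have hGcard : a + 1 ≤ G.card := by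
            have hins : insert x F ⊆ G := Finset.insert_subset hxG hFG
            have hc2 : (insert x F).card = a + 1 := by
              rw [Finset.card_insert_of_notMem hxF, hFcard]
            have hc3 := Finset.card_le_card hins
            omega
          exact absurd hGcard (by
            have hGs : G.card ≤ G.min' ⟨a, haG⟩ := (hD.1 G (by simp)).1 ⟨a, haG⟩
            have hm : G.min' ⟨a, haG⟩ ≤ a := Finset.min'_le G a haG
            omega)
        have hcov' : A \ F ⊆ chainUnion D' := by
          intro x hx
          have hxm : x ∈ G ∪ chainUnion D' := hcover (Finset.mem_sdiff.mp hx).1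
          rcases Finset.mem_union.mp hxm with h | h
          · exact absurd h (hGA' x hx)
          · exact h
        have hle := IH (A \ F).card hA'card (A \ F) rfl hA'ne (F₂ :: C'')
          hGood' D' hD.tail' hcov'
        simp only [List.length_cons] at hle ⊢
        omega
      · have haD' : a ∈ chainUnion D' := by
          rcases Finset.mem_union.mp (hcover haA : a ∈ G ∪ chainUnion D') with h | h
          · exact absurd h haG
          · exact h
        have hcov' : A ⊆ chainUnion D' := by
          intro x hx
          rcases Finset.mem_union.mp (hcover hx : x ∈ G ∪ chainUnion D') with h | h
          · exfalso
            have := lt_of_mem_chainUnion hD h haD'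
            exact absurd (A.min'_le x hx) (not_le.mpr this)
          · exact h
        have := ihD hD.tail' hcov'
        simp only [List.length_cons] at this ⊢
        omega

lemma tau1_eq_of_goodChain {A : Finset ℕ} (hne : A.Nonempty) {C : List (Finset ℕ)}
    (hC : GoodChain A C) : tau1 A = C.length := by
  have hmem : C.length ∈ {m | ∃ D : List (Finset ℕ),
      SchreierChainList D ∧ D.length = m ∧ A ⊆ chainUnion D} :=
    ⟨C, hC.1, rfl, by rw [hC.2.1]⟩
  rw [tau1]
  apply le_antisymm (Nat.sInf_le hmem)
  apply le_csInf ⟨C.length, hmem⟩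
  rintro m ⟨D, hD, rfl, hcov⟩
  exact goodChain_length_le A.card A rfl hne C hC D hD hcov

end Tau1Char

/-- Characterization of the Schreier covering number: τ₁(A) = m iff A is the union of a
Schreier chain of length m whose first m-1 sets are maximal. -/
theorem tau1_eq_iff (A : Finset ℕ) (hA : ∀ a ∈ A, 0 < a) (m : ℕ) (hm : 1 ≤ m) :
    tau1 A = m ↔
      ∃ C : List (Finset ℕ), SchreierChainList C ∧ C.length = m ∧ chainUnion C = A ∧
        ∀ (i : ℕ) (hi : i + 1 < C.length),
          IsMaxSchreier (C.get ⟨i, Nat.lt_of_succ_lt hi⟩) := by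
  constructor
  · intro htau
    have hAne : A.Nonempty := by
      rcases A.eq_empty_or_nonempty with rfl | h
      · exfalso
        have h0 : tau1 (∅ : Finset ℕ) = 0 := by
          rw [tau1]
          exact Nat.eq_zero_of_le_zero (Nat.sInf_le
            ⟨[], ⟨by simp, List.isChain_nil⟩, rfl, by simp [chainUnion]⟩)
        omega
      · exact h
    obtain ⟨C, hC⟩ := exists_goodChain A hA hAne
    have hlen : tau1 A = C.length := tau1_eq_of_goodChain hAne hC
    exact ⟨C, hC.1, by omega, hC.2.1, hC.2.2⟩
  · rintro ⟨C, h1, h2, h3, h4⟩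
    have hCne : C ≠ [] := by
      intro h; subst h; simp at h2; omega
    have hAne : A.Nonempty := by
      obtain ⟨F, C', rfl⟩ := List.exists_cons_of_ne_nil hCne
      obtain ⟨x, hx⟩ := (h1.1 F (by simp)).2
      exact ⟨x, h3 ▸ mem_chainUnion.mpr ⟨F, by simp, hx⟩⟩
    have := tau1_eq_of_goodChain hAne ⟨h1, h3, h4⟩
    omega
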